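/- (Switching structure.) Let 1 ≤ i ≤ K and suppose g_i ∈ 𝒮_i, i.e., 1/(h_{i+1}·√P) < g_i ≤ 1/(h_i·√P) if i < K, and 0 ≤ g_K ≤ 1/(h_K·√P) if i = K. Then: if i < K, g_{i+1} > 1/(h_{i+1}·√P); and g_{i−1} ≤ 1/(h_i·√P). -/
import Mathlib


open Finset

/-- Membership in the interval `𝒮ᵢ` (valid for `0 ≤ i ≤ K`):
`𝒮₀ = (1/(h₁√P), ∞)`, `𝒮ᵢ = (1/(h_{i+1}√P), 1/(hᵢ√P)]` for `1 ≤ i ≤ K-1`,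
`𝒮_K = [0, 1/(h_K√P)]`. -/
noncomputable def memS (K : ℕ) (h : ℕ → ℝ) (P : ℝ) (i : ℕ) (a : ℝ) : Prop :=
  (if i = K then 0 ≤ a else 1 / (h (i + 1) * Real.sqrt P) < a) ∧
  (if i = 0 then True else a ≤ 1 / (h i * Real.sqrt P))

/-- `g₀ = 0` and `g_i = √P (∑_{k=1}^i h_k)/(σ² + P ∑_{k=1}^i h_k²)`. -/
noncomputable def g (h : ℕ → ℝ) (P σ : ℝ) (i : ℕ) : ℝ :=
  Real.sqrt P * (∑ k ∈ Finset.Icc 1 i, h k) /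
    (σ ^ 2 + P * ∑ k ∈ Finset.Icc 1 i, (h k) ^ 2)

theorem stmt_4 (K : ℕ) (hK : 1 ≤ K) (h : ℕ → ℝ) (P σ : ℝ) (hP : 0 < P) (hσ : 0 < σ)
    (hpos : 0 < h 1) (hmono : ∀ k, 1 ≤ k → k < K → h k ≤ h (k + 1))
    (i : ℕ) (hi1 : 1 ≤ i) (hiK : i ≤ K)
    (hgi : memS K h P i (g h P σ i)) :
    (i < K → 1 / (h (i + 1) * Real.sqrt P) < g h P σ (i + 1)) ∧
    g h P σ (i - 1) ≤ 1 / (h i * Real.sqrt P) := by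
  have hpos' : ∀ k, 1 ≤ k → k ≤ K → 0 < h k := by
    intro k hk1 hkK
    induction k with
    | zero => omega
    | succ n ih =>
      rcases Nat.lt_or_ge 1 (n + 1) with h1 | h1
      · have hn1 : 1 ≤ n := by omega
        exact lt_of_lt_of_le (ih hn1 (by omega)) (hmono n hn1 (by omega))
      · have : n + 1 = 1 := by omega
        rw [this]; exact hpos
  obtain ⟨j, rfl⟩ : ∃ j, i = j + 1 := ⟨i - 1, by omega⟩
  set S := ∑ k ∈ Finset.Icc 1 (j + 1), h k with hS
  set Q := ∑ k ∈ Finset.Icc 1 (j + 1), (h k) ^ 2 with hQ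
  set Sj := ∑ k ∈ Finset.Icc 1 j, h k with hSj
  set Qj := ∑ k ∈ Finset.Icc 1 j, (h k) ^ 2 with hQj
  have hQ0 : 0 ≤ Q := Finset.sum_nonneg fun _ _ => sq_nonneg _
  have hQj0 : 0 ≤ Qj := Finset.sum_nonneg fun _ _ => sq_nonneg _
  have hSsplit : S = Sj + h (j + 1) := by
    rw [hS, hSj, Finset.sum_Icc_succ_top (by omega : 1 ≤ j + 1)]
  have hQsplit : Q = Qj + (h (j + 1)) ^ 2 := by
    rw [hQ, hQj, Finset.sum_Icc_succ_top (by omega : 1 ≤ j + 1)]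
  have hD : 0 < σ ^ 2 + P * Q := by positivity
  have hDj : 0 < σ ^ 2 + P * Qj := by positivity
  have hsP : 0 < Real.sqrt P := Real.sqrt_pos.2 hP
  have hPP : Real.sqrt P * Real.sqrt P = P := Real.mul_self_sqrt hP.le
  have hhi : 0 < h (j + 1) := hpos' (j + 1) hi1 hiK
  constructor
  · intro hiK'
    have hne : j + 1 ≠ K := Nat.ne_of_lt hiK'
    have hhi1 : 0 < h (j + 2) := hpos' (j + 2) (by omega) (by omega)
    have h1 : 1 / (h (j + 1 + 1) * Real.sqrt P) < g h P σ (j + 1) := by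
      have := hgi.1; simpa [hne] using this
    rw [g] at h1
    rw [div_lt_div_iff₀ (by positivity) hD] at h1
    rw [g, Finset.sum_Icc_succ_top (by omega : 1 ≤ j + 1 + 1),
      Finset.sum_Icc_succ_top (by omega : 1 ≤ j + 1 + 1)]
    have hD2 : 0 < σ ^ 2 + P * (Q + (h (j + 1 + 1)) ^ 2) := by positivity
    rw [div_lt_div_iff₀ (by positivity) hD2]
    nlinarith [h1, hPP, sq_nonneg (h (j + 2))]
  · have h2 : g h P σ (j + 1) ≤ 1 / (h (j + 1) * Real.sqrt P) := by
      have := hgi.2; simpa using this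
    rw [g, div_le_div_iff₀ hD (by positivity)] at h2
    rw [← hS] at h2
    show g h P σ j ≤ _
    rw [g, div_le_div_iff₀ hDj (by positivity), ← hSj]
    have e : ∀ x : ℝ, Real.sqrt P * x * (h (j + 1) * Real.sqrt P) = P * (h (j + 1) * x) := by
      intro x; linear_combination x * h (j + 1) * hPP
    rw [e S, hSsplit, hQsplit] at h2
    rw [e Sj]
    nlinarith [h2]
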